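/- The polynomial identity ∑_{k=0}^{⌊n/2⌋} n!/((n-2k)!·2^k·k!) · x^{n-2k} equals the Hermite-type polynomial H_n(x) defined by H_0 = 1, H_1(x) = x, H_{n+2}(x) = x·H_{n+1}(x) + (n+1)·H_n(x); in particular t(n) = H_n(1). -/

import Mathlib

open Polynomial

/-- The number of involutions of `Fin n`. -/
noncomputable def involCount (n : ℕ) : ℕ := Nat.card {σ : Equiv.Perm (Fin n) // σ * σ = 1}

open Equiv Equiv.Perm

variable {α : Type*} [DecidableEq α]

private lemma invol_mem_iff {p : α → Prop} {c σ : Perm α}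
    (hc2 : c * c = 1) (h2 : σ * σ = 1) (hout : ∀ x, ¬ p x → σ x = c x)
    (hcfix : ∀ x, p x → c x = x) (hcmap : ∀ x, ¬ p x → ¬ p (c x)) :
    ∀ x, p x ↔ p (σ x) := by
  have hσσ : ∀ y, σ (σ y) = y := fun y => by
    have := Equiv.ext_iff.mp h2 y; simpa [Perm.mul_apply] using this
  have hccy : ∀ y, c (c y) = y := fun y => by
    have := Equiv.ext_iff.mp hc2 y; simpa [Perm.mul_apply] using this
  intro x
  constructor
  · intro hx
    by_contra hns
    have h1 : σ (σ x) = c (σ x) := hout _ hns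
    rw [hσσ] at h1
    have h3 : c x = c (c (σ x)) := by rw [← h1]
    rw [hccy, hcfix x hx] at h3
    exact hns (h3 ▸ hx)
  · intro hx
    by_contra hnx
    exact hcmap x hnx (hout x hnx ▸ hx)

/-- Involutions agreeing with a fixed involution `c` off `p` correspond to
involutions of the subtype `p`. -/
def involRestrictEquiv (p : α → Prop) [DecidablePred p] (c : Perm α)
    (hc2 : c * c = 1) (hcfix : ∀ x, p x → c x = x) (hcmap : ∀ x, ¬ p x → ¬ p (c x)) :
    {σ : Perm α // σ * σ = 1 ∧ ∀ x, ¬ p x → σ x = c x} ≃ {τ : Perm (Subtype p) // τ * τ = 1} where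
  toFun := fun σ => ⟨σ.1.subtypePerm (fun x => (invol_mem_iff hc2 σ.2.1 σ.2.2 hcfix hcmap x).symm), by
    ext z
    have := Equiv.ext_iff.mp σ.2.1 z.1
    simp only [Perm.mul_apply, Perm.subtypePerm_apply, Perm.one_apply, Subtype.ext_iff] at this ⊢
    exact this⟩
  invFun := fun τ => ⟨Perm.ofSubtype τ.1 * c, by
    have hcomm : Commute (Perm.ofSubtype τ.1) c := by
      apply Equiv.Perm.Disjoint.commute
      intro x
      by_cases hx : p x
      · exact Or.inr (hcfix x hx)
      · exact Or.inl (Perm.ofSubtype_apply_of_not_mem τ.1 hx)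
    calc (Perm.ofSubtype τ.1 * c) * (Perm.ofSubtype τ.1 * c)
        = Perm.ofSubtype τ.1 * (c * Perm.ofSubtype τ.1) * c := by group
      _ = Perm.ofSubtype τ.1 * (Perm.ofSubtype τ.1 * c) * c := by rw [hcomm.eq]
      _ = (Perm.ofSubtype τ.1 * Perm.ofSubtype τ.1) * (c * c) := by group
      _ = 1 := by rw [← map_mul, τ.2, map_one, hc2, one_mul],
    fun x hx => by
      have : ¬ p (c x) := hcmap x hx
      simp [Perm.mul_apply, Perm.ofSubtype_apply_of_not_mem τ.1 this]⟩
  left_inv := fun σ => by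
    apply Subtype.ext
    ext x
    by_cases hx : p x
    · have hcx : c x = x := hcfix x hx
      simp [Perm.mul_apply, hcx, Perm.ofSubtype_apply_of_mem _ hx]
    · have : ¬ p (c x) := hcmap x hx
      rw [Perm.mul_apply, Perm.ofSubtype_apply_of_not_mem _ this]
      exact (σ.2.2 x hx).symm
  right_inv := fun τ => by
    apply Subtype.ext
    ext x
    have hcx : c x.1 = x.1 := hcfix x.1 x.2
    simp [Perm.subtypePerm_apply, Perm.mul_apply, hcx, Perm.ofSubtype_apply_of_mem _ x.2]

/-- Conjugation by `g` as an equivalence of involution fibers. -/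
def involConjEquiv (g : Perm α) (x₀ a : α) :
    {σ : Perm α // σ * σ = 1 ∧ σ x₀ = a} ≃ {σ : Perm α // σ * σ = 1 ∧ σ (g x₀) = g a} where
  toFun := fun σ => ⟨g * σ.1 * g⁻¹, by
      have h := σ.2.1
      calc (g * σ.1 * g⁻¹) * (g * σ.1 * g⁻¹) = g * (σ.1 * σ.1) * g⁻¹ := by group
        _ = 1 := by rw [h]; group,
    by simp [Perm.mul_apply, σ.2.2]⟩
  invFun := fun σ => ⟨g⁻¹ * σ.1 * g, by
      have h := σ.2.1
      calc (g⁻¹ * σ.1 * g) * (g⁻¹ * σ.1 * g) = g⁻¹ * (σ.1 * σ.1) * g := by group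
        _ = 1 := by rw [h]; group,
    by
      simp only [Perm.mul_apply]
      rw [σ.2.2]
      simp⟩
  left_inv := fun σ => by apply Subtype.ext; simp only; group
  right_inv := fun σ => by apply Subtype.ext; simp only; group

private lemma permCongr_mul {β : Type*} (e : α ≃ β) (σ τ : Perm α) :
    e.permCongr (σ * τ) = e.permCongr σ * e.permCongr τ := by
  ext b; simp [Perm.mul_apply]

/-- Transport of involutions along an equivalence. -/
def involCongr {β : Type*} (e : α ≃ β) :
    {σ : Perm α // σ * σ = 1} ≃ {σ : Perm β // σ * σ = 1} :=
  e.permCongr.subtypeEquiv fun σ => by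
    constructor
    · intro h
      rw [← permCongr_mul, h]
      ext b; simp
    · intro h
      apply e.permCongr.injective
      rw [permCongr_mul, h]
      ext b; simp

private lemma card_pierced (n : ℕ) : Fintype.card {x : Fin (n+2) // x ≠ 0} = n + 1 := by
  simp [Fintype.card_subtype_compl]

private lemma last_ne_zero (n : ℕ) : Fin.last (n+1) ≠ 0 := by
  simp [Fin.ext_iff]

private lemma card_middle (n : ℕ) :
    Fintype.card {x : Fin (n+2) // x ≠ 0 ∧ x ≠ Fin.last (n+1)} = n := by
  have h1 : Fintype.card {x : Fin (n+2) // x ≠ 0 ∧ x ≠ Fin.last (n+1)} =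
      Fintype.card {x : Fin (n+2) // ¬ (x = 0 ∨ x = Fin.last (n+1))} :=
    Fintype.card_congr (Equiv.subtypeEquivRight (fun x => by tauto))
  rw [h1, Fintype.card_subtype_compl]
  have h2 : Fintype.card {x : Fin (n+2) // x = 0 ∨ x = Fin.last (n+1)} = 2 := by
    rw [Fintype.card_subtype]
    rw [show (Finset.filter (fun x : Fin (n+2) => x = 0 ∨ x = Fin.last (n+1)) Finset.univ)
        = {0, Fin.last (n+1)} from by ext x; simp]
    rw [Finset.card_insert_of_notMem (by simp [(last_ne_zero n).symm])]
    simp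
  rw [h2]
  simp

/-- Involutions with `σ 0 = 0` correspond to involutions of `Fin (n+1)`. -/
noncomputable def fiberZeroEquiv (n : ℕ) :
    {σ : Perm (Fin (n+2)) // σ * σ = 1 ∧ σ 0 = 0} ≃ {σ : Perm (Fin (n+1)) // σ * σ = 1} := by
  refine ((Equiv.subtypeEquivRight (fun σ => and_congr_right fun h2 => ?_)).trans
    (involRestrictEquiv (fun x : Fin (n+2) => x ≠ 0) 1 (one_mul 1) (fun x _ => rfl)
      (fun x hx => by simpa using hx))).trans
    (involCongr (Fintype.equivFinOfCardEq (card_pierced n)))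
  constructor
  · intro h x hx
    simp only [ne_eq, not_not] at hx
    subst hx
    simpa using h
  · intro h
    simpa using h 0 (by simp)

/-- Involutions with `σ 0 = last` correspond to involutions of `Fin n`. -/
noncomputable def fiberLastEquiv (n : ℕ) :
    {σ : Perm (Fin (n+2)) // σ * σ = 1 ∧ σ 0 = Fin.last (n+1)} ≃
      {σ : Perm (Fin n) // σ * σ = 1} := by
  refine ((Equiv.subtypeEquivRight (fun σ => and_congr_right fun h2 => ?_)).trans
    (involRestrictEquiv (fun x : Fin (n+2) => x ≠ 0 ∧ x ≠ Fin.last (n+1))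
      (Equiv.swap 0 (Fin.last (n+1))) (Equiv.swap_mul_self _ _)
      (fun x hx => Equiv.swap_apply_of_ne_of_ne hx.1 hx.2)
      (fun x hx => by
        have hx' : x = 0 ∨ x = Fin.last (n+1) := by tauto
        rcases hx' with h0 | h0 <;> subst h0
        · rw [Equiv.swap_apply_left]
          simp [last_ne_zero n]
        · rw [Equiv.swap_apply_right]
          simp [(last_ne_zero n).symm]))).trans
    (involCongr (Fintype.equivFinOfCardEq (card_middle n)))
  have hσσ : σ * σ = 1 → ∀ y, σ (σ y) = y := fun h y => by
    have := Equiv.ext_iff.mp h y; simpa [Perm.mul_apply] using this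
  constructor
  · intro h x hx
    have hx' : x = 0 ∨ x = Fin.last (n+1) := by tauto
    rcases hx' with h0 | h0 <;> subst h0
    · rw [h, Equiv.swap_apply_left]
    · rw [Equiv.swap_apply_right, ← h, hσσ h2]
  · intro h
    have := h 0 (by simp)
    rwa [Equiv.swap_apply_left] at this

theorem involCount_rec (n : ℕ) :
    involCount (n+2) = involCount (n+1) + (n+1) * involCount n := by
  classical
  have key : involCount (n+2)
      = ∑ a : Fin (n+2), Fintype.card {σ : Perm (Fin (n+2)) // σ * σ = 1 ∧ σ 0 = a} := by
    rw [involCount, Nat.card_eq_fintype_card]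
    have e : {σ : Perm (Fin (n+2)) // σ * σ = 1}
        ≃ Σ a : Fin (n+2), {σ : Perm (Fin (n+2)) // σ * σ = 1 ∧ σ 0 = a} :=
      (Equiv.sigmaFiberEquiv
        (fun σ : {σ : Perm (Fin (n+2)) // σ * σ = 1} => σ.1 0)).symm.trans
        (Equiv.sigmaCongrRight fun a => Equiv.subtypeSubtypeEquivSubtypeInter
          (fun σ : Perm (Fin (n+2)) => σ * σ = 1) (fun σ => σ 0 = a))
    rw [Fintype.card_congr e, Fintype.card_sigma]
  have hfib0 : Fintype.card {σ : Perm (Fin (n+2)) // σ * σ = 1 ∧ σ 0 = 0}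
      = involCount (n+1) := by
    rw [Fintype.card_congr (fiberZeroEquiv n), involCount, Nat.card_eq_fintype_card]
  have hfiba : ∀ a : Fin (n+2), a ≠ 0 →
      Fintype.card {σ : Perm (Fin (n+2)) // σ * σ = 1 ∧ σ 0 = a} = involCount n := by
    intro a ha
    have hg0 : (Equiv.swap a (Fin.last (n+1))) 0 = 0 :=
      Equiv.swap_apply_of_ne_of_ne (Ne.symm ha) (Ne.symm (last_ne_zero n))
    have hga : (Equiv.swap a (Fin.last (n+1))) a = Fin.last (n+1) := Equiv.swap_apply_left _ _
    have e := (involConjEquiv (Equiv.swap a (Fin.last (n+1))) 0 a).trans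
      ((Equiv.subtypeEquivRight (fun σ => by rw [hg0, hga])).trans (fiberLastEquiv n))
    rw [Fintype.card_congr e, involCount, Nat.card_eq_fintype_card]
  rw [key, ← Finset.add_sum_erase _ _ (Finset.mem_univ (0 : Fin (n+2))), hfib0]
  congr 1
  rw [Finset.sum_congr rfl (fun a ha => hfiba a (Finset.ne_of_mem_erase ha))]
  rw [Finset.sum_const, Finset.card_erase_of_mem (Finset.mem_univ _), Finset.card_univ,
    Fintype.card_fin]
  simp [mul_comm]

theorem involCount_zero : involCount 0 = 1 := by
  rw [involCount, Nat.card_eq_fintype_card]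
  decide

theorem involCount_one : involCount 1 = 1 := by
  rw [involCount, Nat.card_eq_fintype_card]
  decide

open Polynomial

noncomputable def bcoef (n k : ℕ) : ℚ :=
  if 2*k ≤ n then
    (Nat.factorial n : ℚ) / ((Nat.factorial (n - 2*k) : ℚ) * 2^k * (Nat.factorial k : ℚ))
  else 0

noncomputable def PP (n : ℕ) : Polynomial ℚ :=
  ∑ k ∈ Finset.range (n+1), bcoef n k • (X : Polynomial ℚ)^(n - 2*k)

lemma bcoef_zero (m : ℕ) : bcoef m 0 = 1 := by
  have h := Nat.factorial_ne_zero m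
  simp [bcoef, Nat.factorial]
  exact_mod_cast h

lemma bcoef_big {n k : ℕ} (h : n < 2*k) : bcoef n k = 0 := by
  rw [bcoef, if_neg (by omega)]

lemma PP_eq (n : ℕ) : PP n = ∑ k ∈ Finset.range (n / 2 + 1),
    ((Nat.factorial n : ℚ) /
      ((Nat.factorial (n - 2 * k) : ℚ) * 2 ^ k * (Nat.factorial k : ℚ))) •
        (X : Polynomial ℚ) ^ (n - 2 * k) := by
  rw [PP, ← Finset.sum_subset (Finset.range_subset_range.mpr (by omega : n/2+1 ≤ n+1))
    (fun x _ hx => by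
      rw [bcoef_big (by
        simp only [Finset.mem_range] at hx ⊢
        omega), zero_smul])]
  refine Finset.sum_congr rfl fun k hk => ?_
  simp only [Finset.mem_range] at hk
  rw [bcoef, if_pos (by omega)]

lemma bcoef_key (n : ℕ) : ∀ k, bcoef (n+2) k
    = bcoef (n+1) k + (if k = 0 then 0 else ((n:ℚ)+1) * bcoef n (k-1)) := by
  intro k
  match k with
  | 0 => simp [bcoef_zero]
  | (j+1) =>
    simp only [if_neg (Nat.succ_ne_zero j), Nat.add_sub_cancel]
    by_cases hk : 2*(j+1) ≤ n+1
    · -- main case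
      obtain ⟨a, rfl⟩ : ∃ a, n = 2*j+1+a := ⟨n-(2*j+1), by omega⟩
      rw [bcoef, if_pos (by omega), bcoef, if_pos (by omega), bcoef, if_pos (by omega)]
      rw [show 2*j+1+a+2 - 2*(j+1) = a+1 from by omega,
        show 2*j+1+a+1 - 2*(j+1) = a from by omega,
        show 2*j+1+a - 2*j = a+1 from by omega]
      rw [show 2*j+1+a+2 = (2*j+1+a+1)+1 from by ring, Nat.factorial_succ (2*j+1+a+1),
        Nat.factorial_succ (2*j+1+a), Nat.factorial_succ a, Nat.factorial_succ j,
        pow_succ]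
      have ha := Nat.factorial_ne_zero a
      have hj := Nat.factorial_ne_zero j
      have haq : ((Nat.factorial a : ℚ)) ≠ 0 := by exact_mod_cast ha
      have hjq : ((Nat.factorial j : ℚ)) ≠ 0 := by exact_mod_cast hj
      push_cast
      field_simp
      ring
    · by_cases hk2 : 2*(j+1) ≤ n+2
      · -- boundary: n = 2j
        obtain rfl : n = 2*j := by omega
        rw [bcoef, if_pos (by omega), bcoef, if_neg (by omega), bcoef, if_pos (by omega)]
        rw [show 2*j+2 - 2*(j+1) = 0 from by omega, show 2*j - 2*j = 0 from by omega]
        rw [show 2*j+2 = (2*j+1)+1 from by ring, Nat.factorial_succ (2*j+1),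
          Nat.factorial_succ (2*j), Nat.factorial_succ j, pow_succ]
        have hj := Nat.factorial_ne_zero j
        have hjq : ((Nat.factorial j : ℚ)) ≠ 0 := by exact_mod_cast hj
        push_cast
        field_simp
        ring
      · rw [bcoef_big (by omega), bcoef_big (by omega), bcoef_big (by omega)]
        simp

lemma PP_rec (n : ℕ) : PP (n+2) = X * PP (n+1) + ((n:ℚ)+1) • PP n := by
  have hX : X * PP (n+1) = ∑ k ∈ Finset.range (n+3),
      bcoef (n+1) k • (X : Polynomial ℚ)^(n+2 - 2*k) := by
    rw [PP, Finset.mul_sum, Finset.sum_range_succ (n := n+2)]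
    rw [bcoef_big (by omega), zero_smul, add_zero]
    refine Finset.sum_congr rfl fun k hk => ?_
    simp only [Finset.mem_range] at hk
    by_cases h : 2*k ≤ n+1
    · rw [mul_smul_comm, ← pow_succ', show (n+1-2*k)+1 = n+2-2*k from by omega]
    · rw [bcoef_big (by omega), zero_smul, zero_smul, mul_zero]
  have hS : ((n:ℚ)+1) • PP n = ∑ k ∈ Finset.range (n+3),
      (if k = 0 then 0 else ((n:ℚ)+1) * bcoef n (k-1)) • (X : Polynomial ℚ)^(n+2 - 2*k) := by
    rw [Finset.sum_range_succ' (fun k =>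
      (if k = 0 then 0 else ((n:ℚ)+1) * bcoef n (k-1)) • (X : Polynomial ℚ)^(n+2 - 2*k)) (n+2)]
    simp only [Nat.succ_ne_zero, if_false, if_pos, Nat.add_sub_cancel, zero_smul, add_zero,
      ite_true, ite_false, if_true, reduceIte]
    rw [Finset.sum_range_succ]
    rw [bcoef_big (show n < 2*(n+1) from by omega), mul_zero, zero_smul, add_zero]
    rw [PP, Finset.smul_sum]
    refine Finset.sum_congr rfl fun k hk => ?_
    simp only [Finset.mem_range] at hk
    by_cases h : 2*k ≤ n
    · rw [smul_smul, show n+2 - 2*(k+1) = n - 2*k from by omega]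
    · simp [bcoef_big (show n < 2*k from by omega)]
  rw [hX, hS, ← Finset.sum_add_distrib, PP]
  refine Finset.sum_congr rfl fun k hk => ?_
  rw [bcoef_key n k, add_smul]

lemma PP_zero : PP 0 = 1 := by
  simp [PP, bcoef_zero]

lemma PP_one : PP 1 = X := by
  rw [PP, Finset.sum_range_succ, Finset.sum_range_one, bcoef_zero, bcoef_big (by omega)]
  simp

/-- The matchings polynomials (signless Hermite polynomials) `H_n` defined by
`H_0 = 1`, `H_1 = X`, `H_{n+2} = X·H_{n+1} + (n+1)·H_n` have the explicit expansion
`H_n(x) = ∑_{k≤n/2} n!/((n-2k)!·2ᵏ·k!) · x^{n-2k}`, and `t(n) = H_n(1)`. -/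
theorem hermite_expansion_and_eval (H : ℕ → Polynomial ℚ)
    (h0 : H 0 = 1) (h1 : H 1 = X)
    (hrec : ∀ n : ℕ, H (n + 2) = X * H (n + 1) + ((n : ℚ) + 1) • H n) :
    ∀ n : ℕ,
      H n = ∑ k ∈ Finset.range (n / 2 + 1),
          ((Nat.factorial n : ℚ) /
            ((Nat.factorial (n - 2 * k) : ℚ) * 2 ^ k * (Nat.factorial k : ℚ))) •
              (X : Polynomial ℚ) ^ (n - 2 * k)
        ∧ (involCount n : ℚ) = (H n).eval 1 := by
  have hHP : ∀ n, H n = PP n := by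
    have key : ∀ n, H n = PP n ∧ H (n+1) = PP (n+1) := by
      intro n
      induction n with
      | zero => exact ⟨by rw [h0, PP_zero], by rw [h1, PP_one]⟩
      | succ m ih => exact ⟨ih.2, by rw [hrec, ih.1, ih.2, PP_rec]⟩
    exact fun n => (key n).1
  have hEval : ∀ n, (involCount n : ℚ) = (H n).eval 1 := by
    have key : ∀ n, (involCount n : ℚ) = (H n).eval 1
        ∧ (involCount (n+1) : ℚ) = (H (n+1)).eval 1 := by
      intro n
      induction n with
      | zero =>
        constructor
        · rw [involCount_zero, h0]; simp
        · rw [involCount_one, h1]; simp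
      | succ m ih =>
        refine ⟨ih.2, ?_⟩
        rw [hrec m]
        simp only [eval_add, eval_mul, eval_X, eval_smul, smul_eq_mul, one_mul]
        rw [involCount_rec m]
        push_cast
        rw [ih.1, ih.2]
    exact fun n => (key n).1
  intro n
  exact ⟨(hHP n).trans (PP_eq n), hEval n⟩
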